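/- Let S be a nonnegative integer k × l matrix in which no row is a nonnegative real combination of the other rows and no column is a nonnegative real combination of the other columns. Then S is the slack matrix of some positive affine semigroup if and only if the normalization of Γ_S^row equals ℤ₊^l ∩ Row(S) and Γ_S^col = ℤ₊^k ∩ Col(S). -/

import Mathlib

open Matrix BigOperators

noncomputable section

/-- The ambient space `ℝ^n`. -/
abbrev V (n : ℕ) := Fin n → ℝ

/-- The difference set `Λ_Γ = {x - y : x, y ∈ Γ}` of a set `Γ ⊆ ℝ^n`. -/
def diffSet {n : ℕ} (Γ : Set (V n)) : Set (V n) := {z | ∃ x ∈ Γ, ∃ y ∈ Γ, z = x - y}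

/-- A set is discrete if each of its points is isolated in it. -/
def IsDiscreteSet {n : ℕ} (Λ : Set (V n)) : Prop :=
  ∀ x ∈ Λ, ∃ ε : ℝ, 0 < ε ∧ ∀ y ∈ Λ, dist y x < ε → y = x

/-- An affine semigroup: a finitely generated additive submonoid of `ℝ^n` whose
difference group is discrete (a lattice). -/
def IsAffineSemigroup {n : ℕ} (Γ : Set (V n)) : Prop :=
  (∃ S : Finset (V n), (AddSubmonoid.closure (S : Set (V n)) : Set (V n)) = Γ) ∧
    IsDiscreteSet (diffSet Γ)

/-- A set is positive if `0` is its only element whose negative also belongs to it. -/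
def IsPositive {n : ℕ} (Γ : Set (V n)) : Prop := ∀ x ∈ Γ, -x ∈ Γ → x = 0

/-- The convex cone `K_Γ` of all nonnegative real combinations of elements of `Γ`. -/
def coneOf {n : ℕ} (Γ : Set (V n)) : Set (V n) :=
  {y | ∃ (k : ℕ) (c : Fin k → ℝ) (v : Fin k → V n),
    (∀ i, 0 ≤ c i) ∧ (∀ i, v i ∈ Γ) ∧ y = ∑ i, c i • v i}

/-- The dual cone `K* = {y : ⟨x,y⟩ ≥ 0 for all x ∈ K}`. -/
def dualCone {n : ℕ} (K : Set (V n)) : Set (V n) := {y | ∀ x ∈ K, 0 ≤ x ⬝ᵥ y}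

/-- The dual lattice `Λ* = {w ∈ span(Λ) : ⟨w,v⟩ ∈ ℤ for all v ∈ Λ}`. -/
def dualLattice {n : ℕ} (Λ : Set (V n)) : Set (V n) :=
  {w | w ∈ Submodule.span ℝ Λ ∧ ∀ v ∈ Λ, ∃ m : ℤ, w ⬝ᵥ v = (m : ℝ)}

/-- The dual affine semigroup `Γ* = (Λ_Γ)* ∩ (K_Γ)*`. -/
def dualSemigroup {n : ℕ} (Γ : Set (V n)) : Set (V n) :=
  dualLattice (diffSet Γ) ∩ dualCone (coneOf Γ)

/-- `A` generates the additive monoid `Γ`. -/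
def IsGenSet {n : ℕ} (A Γ : Set (V n)) : Prop := (AddSubmonoid.closure A : Set (V n)) = Γ

/-- `A` is a minimal generating set of the additive monoid `Γ`: it generates, and no
proper subset of it generates. -/
def IsMinGenSet {n : ℕ} (A Γ : Set (V n)) : Prop :=
  IsGenSet A Γ ∧ ∀ B ⊂ A, ¬ IsGenSet B Γ

/-- `S` is the slack matrix of the positive affine semigroup `Γ`: its `(i,j)` entry is
`⟨a i, b j⟩` where `a`, `b` enumerate the minimal generating sets of `Γ` and `Γ*`. -/
def IsSlackMatrix {n k l : ℕ} (Γ : Set (V n)) (S : Matrix (Fin k) (Fin l) ℤ) : Prop :=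
  ∃ (a : Fin k → V n) (b : Fin l → V n),
    Function.Injective a ∧ Function.Injective b ∧
    IsMinGenSet (Set.range a) Γ ∧ IsMinGenSet (Set.range b) (dualSemigroup Γ) ∧
    ∀ i j, (S i j : ℝ) = a i ⬝ᵥ b j

/-- The `i`-th row of an integer matrix, viewed as a real vector. -/
def rowVec {k l : ℕ} (S : Matrix (Fin k) (Fin l) ℤ) (i : Fin k) : V l := fun j => (S i j : ℝ)

/-- The `j`-th column of an integer matrix, viewed as a real vector. -/
def colVec {k l : ℕ} (S : Matrix (Fin k) (Fin l) ℤ) (j : Fin l) : V k := fun i => (S i j : ℝ)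

/-- `Γ_S^row`: all nonnegative integer combinations of the rows of `S`. -/
def GammaRow {k l : ℕ} (S : Matrix (Fin k) (Fin l) ℤ) : Set (V l) :=
  {x | ∃ c : Fin k → ℕ, x = ∑ i, (c i : ℝ) • rowVec S i}

/-- `Γ_S^col`: all nonnegative integer combinations of the columns of `S`. -/
def GammaCol {k l : ℕ} (S : Matrix (Fin k) (Fin l) ℤ) : Set (V k) :=
  {x | ∃ c : Fin l → ℕ, x = ∑ j, (c j : ℝ) • colVec S j}

/-- `Λ_S^row`: all integer combinations of the rows of `S`. -/
def LambdaRow {k l : ℕ} (S : Matrix (Fin k) (Fin l) ℤ) : Set (V l) :=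
  {x | ∃ c : Fin k → ℤ, x = ∑ i, (c i : ℝ) • rowVec S i}

/-- `Λ_S^col`: all integer combinations of the columns of `S`. -/
def LambdaCol {k l : ℕ} (S : Matrix (Fin k) (Fin l) ℤ) : Set (V k) :=
  {x | ∃ c : Fin l → ℤ, x = ∑ j, (c j : ℝ) • colVec S j}

/-- `K_S^row`: all nonnegative real combinations of the rows of `S`. -/
def KRow {k l : ℕ} (S : Matrix (Fin k) (Fin l) ℤ) : Set (V l) :=
  {x | ∃ c : Fin k → ℝ, (∀ i, 0 ≤ c i) ∧ x = ∑ i, c i • rowVec S i}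

/-- `K_S^col`: all nonnegative real combinations of the columns of `S`. -/
def KCol {k l : ℕ} (S : Matrix (Fin k) (Fin l) ℤ) : Set (V k) :=
  {x | ∃ c : Fin l → ℝ, (∀ j, 0 ≤ c j) ∧ x = ∑ j, c j • colVec S j}

/-- `Row(S)`: the row space of `S` over `ℝ`. -/
def RowSpace {k l : ℕ} (S : Matrix (Fin k) (Fin l) ℤ) : Set (V l) :=
  (Submodule.span ℝ (Set.range (rowVec S)) : Set (V l))

/-- `Col(S)`: the column space of `S` over `ℝ`. -/
def ColSpace {k l : ℕ} (S : Matrix (Fin k) (Fin l) ℤ) : Set (V k) :=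
  (Submodule.span ℝ (Set.range (colVec S)) : Set (V k))

/-- `ℤ^l` viewed inside `ℝ^l`. -/
def intPts (l : ℕ) : Set (V l) := {x | ∀ j, ∃ m : ℤ, x j = (m : ℝ)}

/-- `ℤ₊^l` viewed inside `ℝ^l`. -/
def nnIntPts (l : ℕ) : Set (V l) := {x | ∀ j, ∃ m : ℕ, x j = (m : ℝ)}

/-- `ℝ₊^l`: the nonnegative orthant. -/
def nnPts (l : ℕ) : Set (V l) := {x | ∀ j, 0 ≤ x j}

/-- `ι` (a linear map restricting to an additive semigroup homomorphism `Γ → Γ'`) is a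
lift of the positive affine semigroup `Γ`: `Γ'` is a positive affine semigroup and the
adjoint `ι*` (characterized on `Γ` by `⟨x, ι*(y)⟩ = ⟨ι(x), y⟩`) satisfies
`ι*(Γ'*) = Γ*`. -/
structure IsLift {n N : ℕ} (Γ : Set (V n)) (Γ' : Set (V N)) (ι : (V n) →ₗ[ℝ] (V N)) : Prop where
  lift_semigroup : IsAffineSemigroup Γ'
  lift_positive : IsPositive Γ'
  maps_to : ∀ x ∈ Γ, ι x ∈ Γ'
  adjoint_mem : ∀ y ∈ dualSemigroup Γ', ∃ z ∈ dualSemigroup Γ, ∀ x ∈ Γ, x ⬝ᵥ z = (ι x) ⬝ᵥ y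
  adjoint_surj : ∀ z ∈ dualSemigroup Γ, ∃ y ∈ dualSemigroup Γ', ∀ x ∈ Γ, x ⬝ᵥ z = (ι x) ⬝ᵥ y

/-- The nonnegative integer rank: the least inner dimension of a factorization
`A = B * C` with `B`, `C` nonnegative integer matrices. -/
def nnIntRank {m l : Type*} [Fintype m] [Fintype l] (A : Matrix m l ℤ) : ℕ :=
  sInf {r : ℕ | ∃ (B : Matrix m (Fin r) ℤ) (C : Matrix (Fin r) l ℤ),
    (∀ i j, 0 ≤ B i j) ∧ (∀ i j, 0 ≤ C i j) ∧ A = B * C}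

/-- The nonnegative rank: the least inner dimension of a factorization
`A = B * C` with `B`, `C` nonnegative real matrices. -/
def nnRank {m l : Type*} [Fintype m] [Fintype l] (A : Matrix m l ℤ) : ℕ :=
  sInf {r : ℕ | ∃ (B : Matrix m (Fin r) ℝ) (C : Matrix (Fin r) l ℝ),
    (∀ i j, 0 ≤ B i j) ∧ (∀ i j, 0 ≤ C i j) ∧ A.map (fun z => (z : ℝ)) = B * C}

/-- The Fibonacci semigroup `Γ^Fib_n = ℤ² ∩ {(x,y) : 0 ≤ F_{2n}·y ≤ F_{2n+2}·x}`
(with `Nat.fib`, so `F 1 = F 2 = 1`). -/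
def GammaFib (n : ℕ) : Set (V 2) :=
  {p | (∃ a : ℤ, p 0 = (a : ℝ)) ∧ (∃ b : ℤ, p 1 = (b : ℝ)) ∧
    0 ≤ (Nat.fib (2 * n) : ℝ) * p 1 ∧
    (Nat.fib (2 * n) : ℝ) * p 1 ≤ (Nat.fib (2 * n + 2) : ℝ) * p 0}

/-- Fibonacci numbers extended to negative indices by `F_{-m} = (-1)^{m+1} F_m`. -/
def fibZ (m : ℤ) : ℤ :=
  if 0 ≤ m then (Nat.fib m.toNat : ℤ)
  else (-1) ^ ((-m).toNat + 1) * (Nat.fib (-m).toNat : ℤ)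

/-- The `(n+1) × (n+1)` Toeplitz matrix with `(i,j)` entry `F_{2(i-j)+1}`. -/
def Mfib (n : ℕ) : Matrix (Fin (n + 1)) (Fin (n + 1)) ℤ :=
  fun i j => fibZ (2 * ((i : ℤ) - (j : ℤ)) + 1)

/-- `‖A‖₁`: the sum of all entries of a matrix. -/
def entrySum {m l : Type*} [Fintype m] [Fintype l] (A : Matrix m l ℤ) : ℤ := ∑ i, ∑ j, A i j

lemma mem_closure_range_iff {n M : ℕ} (v : Fin M → V n) (x : V n) :
    x ∈ (AddSubmonoid.closure (Set.range v) : Set (V n)) ↔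
      ∃ c : Fin M → ℕ, x = ∑ i, (c i : ℝ) • v i := by
  constructor
  · intro hx
    rw [SetLike.mem_coe] at hx
    induction hx using AddSubmonoid.closure_induction with
    | mem y hy =>
      obtain ⟨i, hi⟩ := hy
      refine ⟨fun t => if t = i then 1 else 0, ?_⟩
      rw [← hi]
      simp [apply_ite (fun (m : ℕ) => (m : ℝ))]
    | zero => exact ⟨0, by simp⟩
    | add y z _ _ hy hz =>
      obtain ⟨c, hc⟩ := hy; obtain ⟨d, hd⟩ := hz
      exact ⟨c + d, by rw [hc, hd]; simp [add_smul, Finset.sum_add_distrib]⟩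
  · rintro ⟨c, rfl⟩
    refine AddSubmonoid.sum_mem _ fun i _ => ?_
    rw [Nat.cast_smul_eq_nsmul]
    exact AddSubmonoid.nsmul_mem (S := AddSubmonoid.closure (Set.range v)) (AddSubmonoid.subset_closure (Set.mem_range_self i)) _
/-- Farkas' lemma over ℚ, by induction on the number of generators. -/
lemma farkasQ {D : Type*} [Fintype D] : ∀ {k : ℕ} (a : Fin k → (D → ℚ)) (x : D → ℚ),
    (∃ c : Fin k → ℚ, (∀ i, 0 ≤ c i) ∧ x = ∑ i, c i • a i) ∨
    (∃ w : D → ℚ, (∀ i, 0 ≤ a i ⬝ᵥ w) ∧ x ⬝ᵥ w < 0) := by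
  intro k
  induction k with
  | zero =>
    intro a x
    by_cases hx : x = 0
    · exact Or.inl ⟨0, fun i => le_refl _, by simp [hx]⟩
    · refine Or.inr ⟨-x, fun i => i.elim0, ?_⟩
      have hnn : 0 ≤ x ⬝ᵥ x := Finset.sum_nonneg fun t _ => mul_self_nonneg _
      have : 0 < x ⬝ᵥ x := by
        rcases lt_or_eq_of_le hnn with h | h
        · exact h
        · exact absurd (dotProduct_self_eq_zero.mp h.symm) hx
      simpa [dotProduct_neg] using neg_neg_iff_pos.mpr this
  | succ k IH =>
    intro a x
    rcases IH (fun i => a i.succ) x with ⟨c, hc, hx⟩ | ⟨w, hw, hxw⟩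
    · refine Or.inl ⟨Fin.cons 0 c, fun i => ?_, ?_⟩
      · refine Fin.cases ?_ ?_ i <;> simp [hc]
      · rw [Fin.sum_univ_succ]; simpa using hx
    · by_cases h0 : 0 ≤ a 0 ⬝ᵥ w
      · refine Or.inr ⟨w, fun i => ?_, hxw⟩
        refine Fin.cases h0 (fun i => hw i) i
      · push_neg at h0
        -- a 0 ⬝ᵥ w < 0
        set mu : Fin k → ℚ := fun i => (a i.succ ⬝ᵥ w) / (a 0 ⬝ᵥ w) with hmu
        set lam : ℚ := (x ⬝ᵥ w) / (a 0 ⬝ᵥ w) with hlam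
        have hlam_pos : 0 < lam := div_pos_of_neg_of_neg hxw h0
        have hmu_nonpos : ∀ i, mu i ≤ 0 := fun i =>
          div_nonpos_of_nonneg_of_nonpos (hw i) h0.le
        rcases IH (fun i => a i.succ - mu i • a 0) (x - lam • a 0) with
          ⟨c, hc, hx⟩ | ⟨w', hw', hxw'⟩
        · refine Or.inl ⟨Fin.cons (lam - ∑ i, c i * mu i) c, fun i => ?_, ?_⟩
          · refine Fin.cases ?_ (fun i => hc i) i
            have : ∑ i, c i * mu i ≤ 0 :=
              Finset.sum_nonpos fun i _ => mul_nonpos_of_nonneg_of_nonpos (hc i) (hmu_nonpos i)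
            simp only [Fin.cons_zero]
            linarith
          · rw [Fin.sum_univ_succ]
            simp only [Fin.cons_zero, Fin.cons_succ]
            have := hx
            rw [sub_eq_iff_eq_add] at this
            rw [this]
            simp only [smul_sub, Finset.sum_sub_distrib, sub_smul, smul_smul]
            rw [Finset.sum_smul]
            module
        · refine Or.inr ⟨w' - ((a 0 ⬝ᵥ w') / (a 0 ⬝ᵥ w)) • w, fun i => ?_, ?_⟩
          · refine Fin.cases ?_ (fun i => ?_) i
            · rw [dotProduct_sub, dotProduct_smul]
              rw [smul_eq_mul, div_mul_cancel₀ _ (ne_of_lt h0)]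
              simp
            · have h := hw' i
              rw [sub_dotProduct, smul_dotProduct] at h
              rw [dotProduct_sub, dotProduct_smul]
              rw [smul_eq_mul] at h ⊢
              rw [hmu] at h
              have e : a i.succ ⬝ᵥ w / (a 0 ⬝ᵥ w) * (a 0 ⬝ᵥ w') =
                  a 0 ⬝ᵥ w' / (a 0 ⬝ᵥ w) * (a i.succ ⬝ᵥ w) := by
                field_simp
              rw [e] at h; exact h
          · rw [dotProduct_sub, dotProduct_smul, smul_eq_mul]
            have h := hxw'
            rw [sub_dotProduct, smul_dotProduct, smul_eq_mul, hlam] at h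
            have e : x ⬝ᵥ w / (a 0 ⬝ᵥ w) * (a 0 ⬝ᵥ w') =
                a 0 ⬝ᵥ w' / (a 0 ⬝ᵥ w) * (x ⬝ᵥ w) := by
              field_simp
            rw [e] at h; exact h
lemma dot_sum_right {n : ℕ} {ι : Type*} (s : Finset ι) (u : V n) (f : ι → V n) :
    u ⬝ᵥ (∑ i ∈ s, f i) = ∑ i ∈ s, u ⬝ᵥ f i := by
  simp only [dotProduct, Finset.sum_apply, Finset.mul_sum]
  exact Finset.sum_comm

lemma dot_sum_left {n : ℕ} {ι : Type*} (s : Finset ι) (u : V n) (f : ι → V n) :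
    (∑ i ∈ s, f i) ⬝ᵥ u = ∑ i ∈ s, f i ⬝ᵥ u := by
  simp only [dotProduct, Finset.sum_apply, Finset.sum_mul]
  exact Finset.sum_comm

lemma zero_mem_closure {n M : ℕ} (v : Fin M → V n) :
    (0 : V n) ∈ (AddSubmonoid.closure (Set.range v) : Set (V n)) :=
  (mem_closure_range_iff v 0).mpr ⟨0, by simp⟩

lemma diffSet_closure_eq {n M : ℕ} (v : Fin M → V n) :
    diffSet (AddSubmonoid.closure (Set.range v) : Set (V n)) =
      {x | ∃ c : Fin M → ℤ, x = ∑ i, (c i : ℝ) • v i} := by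
  ext x
  constructor
  · rintro ⟨p, hp, q, hq, rfl⟩
    obtain ⟨cp, rfl⟩ := (mem_closure_range_iff v p).mp hp
    obtain ⟨cq, rfl⟩ := (mem_closure_range_iff v q).mp hq
    refine ⟨fun i => (cp i : ℤ) - (cq i : ℤ), ?_⟩
    rw [← Finset.sum_sub_distrib]
    congr 1; funext i
    rw [← sub_smul]
    push_cast
    ring_nf
  · rintro ⟨c, rfl⟩
    refine ⟨∑ i, ((c i).toNat : ℝ) • v i, (mem_closure_range_iff v _).mpr ⟨_, rfl⟩,
      ∑ i, (((-(c i)).toNat : ℕ) : ℝ) • v i, (mem_closure_range_iff v _).mpr ⟨_, rfl⟩, ?_⟩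
    rw [← Finset.sum_sub_distrib]
    congr 1; funext i
    rw [← sub_smul]
    congr 1
    have : ((c i).toNat : ℤ) - ((-(c i)).toNat : ℤ) = c i := by
      rcases le_or_gt 0 (c i) with h | h
      · rw [Int.toNat_of_nonneg h, Int.toNat_eq_zero.mpr (by omega)]; ring
      · rw [Int.toNat_eq_zero.mpr h.le, Int.toNat_of_nonneg (by omega)]; ring
    exact_mod_cast (congrArg (fun z : ℤ => (z : ℝ)) this).symm

lemma coneOf_closure_eq {n M : ℕ} (v : Fin M → V n) :
    coneOf (AddSubmonoid.closure (Set.range v) : Set (V n)) =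
      {x | ∃ c : Fin M → ℝ, (∀ i, 0 ≤ c i) ∧ x = ∑ i, c i • v i} := by
  ext x
  constructor
  · rintro ⟨T, c, w, hc, hw, rfl⟩
    choose m hm using fun t => (mem_closure_range_iff v (w t)).mp (hw t)
    refine ⟨fun i => ∑ t, c t * (m t i : ℝ), fun i => Finset.sum_nonneg fun t _ =>
      mul_nonneg (hc t) (Nat.cast_nonneg _), ?_⟩
    calc ∑ t, c t • w t = ∑ t, ∑ i, (c t * (m t i : ℝ)) • v i := by
          refine Finset.sum_congr rfl fun t _ => ?_
          rw [hm t, Finset.smul_sum]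
          refine Finset.sum_congr rfl fun i _ => ?_
          rw [smul_smul]
      _ = ∑ i, (∑ t, c t * (m t i : ℝ)) • v i := by
          rw [Finset.sum_comm]
          refine Finset.sum_congr rfl fun i _ => ?_
          rw [Finset.sum_smul]
  · rintro ⟨c, hc, rfl⟩
    exact ⟨M, c, v, hc, fun i => (mem_closure_range_iff v _).mpr
      ⟨fun t => if t = i then 1 else 0, by simp [apply_ite (fun (m : ℕ) => (m : ℝ))]⟩, rfl⟩

lemma mem_coneOf_self {n : ℕ} {Γ : Set (V n)} {x : V n} (hx : x ∈ Γ) : x ∈ coneOf Γ :=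
  ⟨1, fun _ => 1, fun _ => x, fun _ => zero_le_one, fun _ => hx, by simp⟩

lemma span_diffSet_closure {n M : ℕ} (v : Fin M → V n) :
    Submodule.span ℝ (diffSet (AddSubmonoid.closure (Set.range v) : Set (V n))) =
      Submodule.span ℝ (Set.range v) := by
  apply le_antisymm
  · rw [Submodule.span_le]
    rintro x hx
    rw [diffSet_closure_eq] at hx
    obtain ⟨c, rfl⟩ := hx
    exact Submodule.sum_mem _ fun i _ =>
      Submodule.smul_mem _ _ (Submodule.subset_span (Set.mem_range_self i))
  · rw [Submodule.span_le]
    rintro x ⟨i, rfl⟩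
    refine Submodule.subset_span ?_
    rw [diffSet_closure_eq]
    exact ⟨fun t => if t = i then 1 else 0, by simp [apply_ite (fun (z : ℤ) => (z : ℝ))]⟩

/-- Characterization of the dual semigroup of a finitely generated semigroup. -/
lemma mem_dualSemigroup_closure_iff {n M : ℕ} (v : Fin M → V n) (w : V n) :
    w ∈ dualSemigroup (AddSubmonoid.closure (Set.range v) : Set (V n)) ↔
      w ∈ Submodule.span ℝ (Set.range v) ∧ (∀ i, ∃ m : ℤ, w ⬝ᵥ v i = (m : ℝ)) ∧
        (∀ i, 0 ≤ v i ⬝ᵥ w) := by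
  constructor
  · rintro ⟨⟨hspan, hint⟩, hcone⟩
    refine ⟨by rwa [span_diffSet_closure] at hspan, fun i => ?_, fun i => ?_⟩
    · exact hint (v i) ⟨v i, (mem_closure_range_iff v _).mpr
        ⟨fun t => if t = i then 1 else 0, by simp [apply_ite (fun (m : ℕ) => (m : ℝ))]⟩,
        0, zero_mem_closure v, by simp⟩
    · exact hcone (v i) (mem_coneOf_self ((mem_closure_range_iff v _).mpr
        ⟨fun t => if t = i then 1 else 0, by simp [apply_ite (fun (m : ℕ) => (m : ℝ))]⟩))
  · rintro ⟨hspan, hint, hcone⟩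
    choose m hm using hint
    refine ⟨⟨by rwa [span_diffSet_closure], ?_⟩, ?_⟩
    · intro u hu
      rw [diffSet_closure_eq] at hu
      obtain ⟨c, rfl⟩ := hu
      refine ⟨∑ i, c i * m i, ?_⟩
      rw [dot_sum_right]
      push_cast
      refine Finset.sum_congr rfl fun i _ => ?_
      rw [dotProduct_smul, hm i, smul_eq_mul]
    · intro z hz
      rw [coneOf_closure_eq] at hz
      obtain ⟨c, hc, rfl⟩ := hz
      rw [dot_sum_left]
      exact Finset.sum_nonneg fun i _ => by
        rw [smul_dotProduct, smul_eq_mul]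
        exact mul_nonneg (hc i) (hcone i)
section MatrixFacts

variable {k l : ℕ} (S : Matrix (Fin k) (Fin l) ℤ)

/-- The real matrix corresponding to `S`. -/
def Amat {k l : ℕ} (S : Matrix (Fin k) (Fin l) ℤ) : Matrix (Fin k) (Fin l) ℝ :=
  Matrix.of fun i j => (S i j : ℝ)

lemma Amat_row (i : Fin k) : Amat S i = rowVec S i := rfl

lemma Amat_transpose_col (j : Fin l) : (Amat S)ᵀ j = colVec S j := rfl

lemma Amat_mulVec (w : V l) : (Amat S).mulVec w = fun i => rowVec S i ⬝ᵥ w := rfl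

lemma range_Amat_mulVecLin :
    LinearMap.range (Amat S).mulVecLin = Submodule.span ℝ (Set.range (colVec S)) := by
  rw [Matrix.range_mulVecLin]
  rfl

lemma range_Amat_transpose_mulVecLin :
    LinearMap.range (Amat S)ᵀ.mulVecLin = Submodule.span ℝ (Set.range (rowVec S)) := by
  rw [Matrix.range_mulVecLin]
  rfl

lemma ker_AAT :
    LinearMap.ker (Amat S * (Amat S)ᵀ).mulVecLin = LinearMap.ker (Amat S)ᵀ.mulVecLin := by
  apply le_antisymm
  · intro u hu
    rw [LinearMap.mem_ker, Matrix.mulVecLin_apply] at hu ⊢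
    have h0 : ((Amat S)ᵀ.mulVec u) ⬝ᵥ ((Amat S)ᵀ.mulVec u) = 0 := by
      rw [Matrix.mulVec_transpose, ← Matrix.dotProduct_mulVec, ← Matrix.mulVec_transpose,
        Matrix.mulVec_mulVec, hu]
      simp
    exact dotProduct_self_eq_zero.mp h0
  · intro u hu
    rw [LinearMap.mem_ker, Matrix.mulVecLin_apply] at hu ⊢
    rw [← Matrix.mulVec_mulVec, hu, Matrix.mulVec_zero]

lemma range_AAT :
    LinearMap.range (Amat S * (Amat S)ᵀ).mulVecLin = LinearMap.range (Amat S).mulVecLin := by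
  have hle : LinearMap.range (Amat S * (Amat S)ᵀ).mulVecLin ≤
      LinearMap.range (Amat S).mulVecLin := by
    rintro y ⟨u, rfl⟩
    exact ⟨(Amat S)ᵀ.mulVec u, by rw [Matrix.mulVecLin_apply, Matrix.mulVecLin_apply,
      Matrix.mulVec_mulVec]⟩
  refine Submodule.eq_of_le_of_finrank_le hle ?_
  have h1 := LinearMap.finrank_range_add_finrank_ker (Amat S * (Amat S)ᵀ).mulVecLin
  have h2 := LinearMap.finrank_range_add_finrank_ker ((Amat S)ᵀ).mulVecLin
  rw [ker_AAT] at h1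
  have h3 : Module.finrank ℝ (LinearMap.range (Amat S * (Amat S)ᵀ).mulVecLin) =
      Module.finrank ℝ (LinearMap.range ((Amat S)ᵀ).mulVecLin) := by omega
  have h4 : ((Amat S)ᵀ).rank = (Amat S).rank := Matrix.rank_transpose _
  unfold Matrix.rank at h4
  omega

/-- Surjectivity: every element of the column space is `A *ᵥ w` for some `w` in the
row space. -/
lemma exists_rowspace_preimage (y : V k) (hy : y ∈ Submodule.span ℝ (Set.range (colVec S))) :
    ∃ w ∈ Submodule.span ℝ (Set.range (rowVec S)), (Amat S).mulVec w = y := by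
  rw [← range_Amat_mulVecLin, ← range_AAT] at hy
  obtain ⟨u, hu⟩ := hy
  refine ⟨(Amat S)ᵀ.mulVec u, ?_, ?_⟩
  · rw [← range_Amat_transpose_mulVecLin]
    exact ⟨u, rfl⟩
  · rw [Matrix.mulVec_mulVec]
    exact hu

/-- Injectivity of `w ↦ A *ᵥ w` on the row space. -/
lemma rowspace_mulVec_injective {w : V l} (hw : w ∈ Submodule.span ℝ (Set.range (rowVec S)))
    (h0 : (Amat S).mulVec w = 0) : w = 0 := by
  rw [← range_Amat_transpose_mulVecLin] at hw
  obtain ⟨u, rfl⟩ := hw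
  rw [Matrix.mulVecLin_apply] at h0 ⊢
  have : ((Amat S)ᵀ.mulVec u) ⬝ᵥ ((Amat S)ᵀ.mulVec u) = 0 := by
    rw [Matrix.mulVec_transpose, ← Matrix.dotProduct_mulVec, ← Matrix.mulVec_transpose, h0]
    simp
  exact dotProduct_self_eq_zero.mp this

end MatrixFacts
section Backward

variable {k l : ℕ}

lemma int_dist_lt_one {a b : ℤ} (h : |(a:ℝ) - b| < 1) : a = b := by
  rw [← Int.cast_sub, ← Int.cast_abs] at h
  have h' : |a - b| < (1:ℤ) := by exact_mod_cast h
  rw [abs_lt] at h'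
  omega

lemma mulVec_sum' {k l : ℕ} (A : Matrix (Fin k) (Fin l) ℝ) {ι : Type*} (s : Finset ι)
    (f : ι → V l) : A.mulVec (∑ i ∈ s, f i) = ∑ i ∈ s, A.mulVec (f i) := by
  exact map_sum A.mulVecLin f s

lemma mulVec_smul' {k l : ℕ} (A : Matrix (Fin k) (Fin l) ℝ) (c : ℝ) (v : V l) :
    A.mulVec (c • v) = c • A.mulVec v := by
  exact A.mulVecLin.map_smul c v

lemma GammaRow_eq_closure (S : Matrix (Fin k) (Fin l) ℤ) :
    (AddSubmonoid.closure (Set.range (rowVec S)) : Set (V l)) = GammaRow S := by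
  ext x; exact mem_closure_range_iff (rowVec S) x

/-- Minimal generating set criterion. -/
lemma isMinGenSet_of_not_combo {n M : ℕ} (v : Fin M → V n) (hinj : Function.Injective v)
    (hnc : ∀ i, ¬ ∃ c : Fin M → ℕ, c i = 0 ∧ v i = ∑ i', (c i' : ℝ) • v i') :
    IsMinGenSet (Set.range v) (AddSubmonoid.closure (Set.range v) : Set (V n)) := by
  refine ⟨rfl, ?_⟩
  intro B hB hgen
  obtain ⟨x, hxr, hxB⟩ := Set.exists_of_ssubset hB
  obtain ⟨i0, rfl⟩ := hxr
  have hsub : B ⊆ v '' {i | i ≠ i0} := by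
    intro y hy
    obtain ⟨i, rfl⟩ := hB.1 hy
    exact ⟨i, fun h => hxB (h ▸ hy), rfl⟩
  have hmem : v i0 ∈ (AddSubmonoid.closure (v '' {i | i ≠ i0}) : Set (V n)) := by
    have : v i0 ∈ (AddSubmonoid.closure B : Set (V n)) := by
      rw [hgen]
      exact AddSubmonoid.subset_closure (Set.mem_range_self i0)
    exact AddSubmonoid.closure_mono hsub this
  have hP : ∀ x ∈ AddSubmonoid.closure (v '' {i | i ≠ i0}),
      ∃ c : Fin M → ℕ, c i0 = 0 ∧ x = ∑ i', (c i' : ℝ) • v i' := by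
    intro x hx
    induction hx using AddSubmonoid.closure_induction with
    | mem y hy =>
      obtain ⟨i, hi, rfl⟩ := hy
      refine ⟨fun t => if t = i then 1 else 0, by simp [Ne.symm hi], ?_⟩
      simp [apply_ite (fun (m : ℕ) => (m : ℝ))]
    | zero => exact ⟨0, rfl, by simp⟩
    | add y z _ _ hy hz =>
      obtain ⟨c, hc0, hc⟩ := hy; obtain ⟨d, hd0, hd⟩ := hz
      exact ⟨c + d, by simp [hc0, hd0],
        by rw [hc, hd]; simp [add_smul, Finset.sum_add_distrib]⟩
  obtain ⟨c, hc0, hc⟩ := hP (v i0) hmem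
  exact hnc i0 ⟨c, hc0, hc⟩

lemma rowVec_injective (S : Matrix (Fin k) (Fin l) ℤ)
    (hrows : ∀ i : Fin k, ¬ ∃ c : Fin k → ℝ, (∀ i', 0 ≤ c i') ∧ c i = 0 ∧
      rowVec S i = ∑ i', c i' • rowVec S i') : Function.Injective (rowVec S) := by
  intro i i' h
  by_contra hne
  refine hrows i ⟨fun t => if t = i' then 1 else 0, fun t => by positivity, by simp [hne], ?_⟩
  simp [h]

lemma not_combo_nat_of_rows (S : Matrix (Fin k) (Fin l) ℤ)
    (hrows : ∀ i : Fin k, ¬ ∃ c : Fin k → ℝ, (∀ i', 0 ≤ c i') ∧ c i = 0 ∧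
      rowVec S i = ∑ i', c i' • rowVec S i') :
    ∀ i, ¬ ∃ c : Fin k → ℕ, c i = 0 ∧ rowVec S i = ∑ i', (c i' : ℝ) • rowVec S i' := by
  rintro i ⟨c, hc0, hc⟩
  exact hrows i ⟨fun i' => (c i' : ℝ), fun i' => Nat.cast_nonneg _, by simp [hc0], hc⟩

/-- The backward implication. -/
lemma backward_dir (S : Matrix (Fin k) (Fin l) ℤ)
    (hnn : ∀ i j, 0 ≤ S i j)
    (hrows : ∀ i : Fin k, ¬ ∃ c : Fin k → ℝ, (∀ i', 0 ≤ c i') ∧ c i = 0 ∧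
      rowVec S i = ∑ i', c i' • rowVec S i')
    (hcols : ∀ j : Fin l, ¬ ∃ c : Fin l → ℝ, (∀ j', 0 ≤ c j') ∧ c j = 0 ∧
      colVec S j = ∑ j', c j' • colVec S j')
    (h2 : GammaCol S = nnIntPts k ∩ ColSpace S) :
    IsAffineSemigroup (GammaRow S) ∧ IsPositive (GammaRow S) ∧ IsSlackMatrix (GammaRow S) S := by
  have hΓ := GammaRow_eq_closure S
  -- integer entries of diffSet elements
  have hdiff_int : ∀ x ∈ diffSet (GammaRow S), ∀ j, ∃ m : ℤ, x j = (m : ℝ) := by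
    intro x hx j
    rw [← hΓ, diffSet_closure_eq] at hx
    obtain ⟨c, rfl⟩ := hx
    refine ⟨∑ i, c i * S i j, ?_⟩
    push_cast
    simp [Finset.sum_apply, rowVec]
  constructor
  · constructor
    · refine ⟨Finset.univ.image (rowVec S), ?_⟩
      rw [Finset.coe_image, Finset.coe_univ, Set.image_univ, hΓ]
    · intro x hx
      refine ⟨1, one_pos, fun y hy hd => ?_⟩
      funext j
      obtain ⟨mx, hmx⟩ := hdiff_int x hx j
      obtain ⟨my, hmy⟩ := hdiff_int y hy j
      have : |(my : ℝ) - mx| < 1 := by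
        rw [← hmy, ← hmx]
        calc |y j - x j| = dist (y j) (x j) := by rw [Real.dist_eq]
          _ ≤ dist y x := dist_le_pi_dist y x j
          _ < 1 := hd
      rw [hmx, hmy, int_dist_lt_one this]
  -- nonnegativity of entries of GammaRow elements
  have hnn_entries : ∀ x ∈ GammaRow S, ∀ j, 0 ≤ x j := by
    rintro x ⟨c, rfl⟩ j
    simp only [Finset.sum_apply, Pi.smul_apply, smul_eq_mul]
    exact Finset.sum_nonneg fun i _ => mul_nonneg (Nat.cast_nonneg _)
      (show (0:ℝ) ≤ ((S i j : ℤ) : ℝ) by exact_mod_cast hnn i j)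
  constructor
  · -- IsPositive
    intro x hx hnx
    funext j
    have h1 := hnn_entries x hx j
    have h2' := hnn_entries (-x) hnx j
    simp only [Pi.neg_apply] at h2'
    have : x j = 0 := le_antisymm (by linarith) h1
    simpa using this
  · -- IsSlackMatrix
    have hainj := rowVec_injective S hrows
    -- construct b
    have hbex : ∀ j : Fin l, ∃ w ∈ Submodule.span ℝ (Set.range (rowVec S)),
        (Amat S).mulVec w = colVec S j :=
      fun j => exists_rowspace_preimage S (colVec S j)
        (Submodule.subset_span (Set.mem_range_self j))
    choose b hbspan hbA using hbex
    have hpair : ∀ i j, rowVec S i ⬝ᵥ b j = (S i j : ℝ) := by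
      intro i j
      have := congrFun (hbA j) i
      exact this
    -- characterization of the dual semigroup
    have hdsg : ∀ w, w ∈ dualSemigroup (GammaRow S) ↔
        w ∈ Submodule.span ℝ (Set.range (rowVec S)) ∧
          (∀ i, ∃ m : ℤ, w ⬝ᵥ rowVec S i = (m : ℝ)) ∧ (∀ i, 0 ≤ rowVec S i ⬝ᵥ w) := by
      intro w
      rw [← hΓ]
      exact mem_dualSemigroup_closure_iff (rowVec S) w
    -- b j are in the dual semigroup
    have hbmem : ∀ j, b j ∈ dualSemigroup (GammaRow S) := by
      intro j
      rw [hdsg]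
      exact ⟨hbspan j, fun i => ⟨S i j, by rw [dotProduct_comm]; exact hpair i j⟩,
        fun i => by rw [hpair i j]; exact_mod_cast hnn i j⟩
    -- every dual semigroup element is an ℕ-combination of the b j
    have hdual_eq : dualSemigroup (GammaRow S) =
        (AddSubmonoid.closure (Set.range b) : Set (V l)) := by
      ext w
      rw [mem_closure_range_iff, hdsg]
      constructor
      · rintro ⟨hspan, hint, hcone⟩
        have hy : (Amat S).mulVec w ∈ nnIntPts k ∩ ColSpace S := by
          constructor
          · intro i
            obtain ⟨m, hm⟩ := hint i
            rw [dotProduct_comm] at hm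
            refine ⟨m.toNat, ?_⟩
            have h0 : (0:ℝ) ≤ (m : ℝ) := hm ▸ hcone i
            have : (0:ℤ) ≤ m := by exact_mod_cast h0
            rw [show ((Amat S).mulVec w) i = rowVec S i ⬝ᵥ w from rfl, hm]
            exact_mod_cast (congrArg (fun z : ℤ => (z : ℝ)) (Int.toNat_of_nonneg this)).symm
          · show (Amat S).mulVec w ∈ (Submodule.span ℝ (Set.range (colVec S)) : Set (V k))
            rw [SetLike.mem_coe, ← range_Amat_mulVecLin]
            exact ⟨w, rfl⟩
        rw [← h2] at hy
        obtain ⟨m, hm⟩ := hy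
        refine ⟨m, ?_⟩
        have hdiffspan : w - ∑ j, (m j : ℝ) • b j ∈
            Submodule.span ℝ (Set.range (rowVec S)) :=
          Submodule.sub_mem _ hspan (Submodule.sum_mem _ fun j _ =>
            Submodule.smul_mem _ _ (hbspan j))
        have hA0 : (Amat S).mulVec (w - ∑ j, (m j : ℝ) • b j) = 0 := by
          rw [Matrix.mulVec_sub]
          rw [sub_eq_zero]
          rw [hm]
          rw [mulVec_sum']
          refine Finset.sum_congr rfl fun j _ => ?_
          rw [mulVec_smul', hbA j]
        have := rowspace_mulVec_injective S hdiffspan hA0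
        rw [sub_eq_zero] at this
        exact this
      · rintro ⟨m, rfl⟩
        refine ⟨Submodule.sum_mem _ fun j _ => Submodule.smul_mem _ _ (hbspan j),
          fun i => ⟨∑ j, m j * S i j, ?_⟩, fun i => ?_⟩
        · rw [dotProduct_comm, dot_sum_right]
          push_cast
          refine Finset.sum_congr rfl fun j _ => ?_
          rw [dotProduct_smul, hpair i j, smul_eq_mul]
        · rw [dot_sum_right]
          refine Finset.sum_nonneg fun j _ => ?_
          rw [dotProduct_smul, hpair i j, smul_eq_mul]
          exact mul_nonneg (Nat.cast_nonneg _) (by exact_mod_cast hnn i j)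
    -- injectivity of b
    have hbinj : Function.Injective b := by
      intro j j' h
      by_contra hne
      have : colVec S j = colVec S j' := by rw [← hbA j, ← hbA j', h]
      refine hcols j ⟨fun t => if t = j' then 1 else 0, fun t => by positivity,
        by simp [hne], by simp [this]⟩
    refine ⟨rowVec S, b, hainj, hbinj, ?_, ?_, fun i j => (hpair i j).symm⟩
    · rw [← hΓ]
      exact isMinGenSet_of_not_combo (rowVec S) hainj (not_combo_nat_of_rows S hrows)
    · rw [hdual_eq]
      refine isMinGenSet_of_not_combo b hbinj ?_
      rintro j ⟨c, hc0, hc⟩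
      refine hcols j ⟨fun j' => (c j' : ℝ), fun j' => Nat.cast_nonneg _, by simp [hc0], ?_⟩
      have := congrArg ((Amat S).mulVec) hc
      rw [hbA j, mulVec_sum'] at this
      rw [this]
      refine Finset.sum_congr rfl fun j' _ => ?_
      rw [mulVec_smul', hbA j']

end Backward
section Lattice

lemma coeW_sum_smulR {n : ℕ} (W : Submodule ℝ (V n)) {D : Type*} [Fintype D]
    (c : D → ℝ) (f : D → W) :
    ((∑ t, c t • f t : W) : V n) = ∑ t, c t • (f t : V n) := by
  simp [AddSubmonoidClass.coe_finset_sum]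

lemma coeW_sum_smulZ {n : ℕ} (W : Submodule ℝ (V n)) {D : Type*} [Fintype D]
    (c : D → ℤ) (f : D → W) :
    ((∑ t, c t • f t : W) : V n) = ∑ t, (c t : ℝ) • (f t : V n) := by
  simp only [AddSubmonoidClass.coe_finset_sum]
  refine Finset.sum_congr rfl fun t _ => ?_
  rw [AddSubgroupClass.coe_zsmul, Int.cast_smul_eq_zsmul ℝ]

lemma zsum_eq_rsum {M : Type*} [AddCommGroup M] [Module ℝ M] {D : Type*} [Fintype D]
    (c : D → ℤ) (g : D → M) :
    ∑ t, c t • g t = ∑ t, (c t : ℝ) • g t :=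
  Finset.sum_congr rfl fun t _ => (Int.cast_smul_eq_zsmul ℝ _ _).symm

/-- Dual basis package for the lattice generated by `a`, assuming discreteness. -/
lemma exists_dual_basis {n M0 : ℕ} (a : Fin M0 → V n)
    (hdisc : IsDiscreteSet (diffSet (AddSubmonoid.closure (Set.range a) : Set (V n)))) :
    ∃ (d : ℕ) (eV estar : Fin d → V n),
      (∀ t, estar t ∈ Submodule.span ℝ (Set.range a)) ∧
      (∀ x ∈ Submodule.span ℝ (Set.range a), x = ∑ t, (x ⬝ᵥ estar t) • eV t) ∧
      (∀ x, x ∈ diffSet (AddSubmonoid.closure (Set.range a) : Set (V n)) ↔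
        (x ∈ Submodule.span ℝ (Set.range a) ∧ ∀ t, ∃ m : ℤ, x ⬝ᵥ estar t = (m : ℝ))) := by
  classical
  set W : Submodule ℝ (V n) := Submodule.span ℝ (Set.range a) with hW
  set aW : Fin M0 → W := fun i => ⟨a i, Submodule.subset_span (Set.mem_range_self i)⟩ with haW
  set L : Submodule ℤ W := Submodule.span ℤ (Set.range aW) with hL
  have hcoe : ∀ (c : Fin M0 → ℤ), ((∑ i, c i • aW i : W) : V n) = ∑ i, (c i : ℝ) • a i :=
    fun c => coeW_sum_smulZ W c aW
  -- membership in L via the coercion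
  have hLmem : ∀ z : W, z ∈ L ↔ ∃ c : Fin M0 → ℤ, (z : V n) = ∑ i, (c i : ℝ) • a i := by
    intro z
    rw [hL, Submodule.mem_span_range_iff_exists_fun ℤ]
    constructor
    · rintro ⟨c, hc⟩
      exact ⟨c, by rw [← hc, hcoe]⟩
    · rintro ⟨c, hc⟩
      exact ⟨c, Subtype.ext (by rw [hcoe, ← hc])⟩
  -- diffSet = image of L
  have hdiffL : ∀ x : V n, x ∈ diffSet (AddSubmonoid.closure (Set.range a) : Set (V n)) ↔
      ∃ z : W, z ∈ L ∧ (z : V n) = x := by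
    intro x
    rw [diffSet_closure_eq]
    constructor
    · rintro ⟨c, rfl⟩
      refine ⟨⟨∑ i, (c i : ℝ) • a i, Submodule.sum_mem _ fun i _ =>
        Submodule.smul_mem _ _ (Submodule.subset_span (Set.mem_range_self i))⟩, ?_, rfl⟩
      rw [hLmem]
      exact ⟨c, rfl⟩
    · rintro ⟨z, hz, rfl⟩
      obtain ⟨c, hc⟩ := (hLmem z).mp hz
      exact ⟨c, hc⟩
  -- discreteness of L
  haveI : DiscreteTopology L := by
    rw [discreteTopology_iff_isOpen_singleton]
    intro z
    rw [Metric.isOpen_singleton_iff]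
    obtain ⟨ε, hε, hsep⟩ := hdisc (z : W) ((hdiffL _).mpr ⟨z, z.2, rfl⟩)
    refine ⟨ε, hε, fun y hy => ?_⟩
    have hyd : ((y : W) : V n) ∈ diffSet (AddSubmonoid.closure (Set.range a) : Set (V n)) :=
      (hdiffL _).mpr ⟨y, y.2, rfl⟩
    have hdist : dist ((y : W) : V n) ((z : W) : V n) < ε := hy
    exact Subtype.ext (Subtype.ext (hsep _ hyd hdist))
  have h1 : Submodule.span ℝ (Set.range aW) = ⊤ := by
    apply Submodule.map_injective_of_injective W.injective_subtype
    rw [Submodule.map_span, ← Set.range_comp]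
    have heq : (W.subtype ∘ aW) = a := rfl
    rw [heq, Submodule.map_top, Submodule.range_subtype]
  haveI : IsZLattice ℝ L := by
    constructor
    apply le_antisymm le_top
    rw [← h1]
    exact Submodule.span_mono Submodule.subset_span
  haveI : ProperSpace W := FiniteDimensional.proper_real W
  haveI : Module.Finite ℤ L := ZLattice.module_finite ℝ L
  haveI : Module.Free ℤ L := ZLattice.module_free ℝ L
  obtain ⟨d, e, hspanE'⟩ : ∃ (d : ℕ) (e : Module.Basis (Fin d) ℝ W),
      Submodule.span ℤ (Set.range e) = L := by
    have b0 : Module.Basis (Module.Free.ChooseBasisIndex ℤ L) ℤ L := Module.Free.chooseBasis ℤ L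
    have hsp : Submodule.span ℤ (Set.range (Module.Basis.ofZLatticeBasis ℝ L b0)) = L :=
      Module.Basis.ofZLatticeBasis_span ℝ L b0
    refine ⟨Fintype.card (Module.Free.ChooseBasisIndex ℤ L),
      (Module.Basis.ofZLatticeBasis ℝ L b0).reindex (Fintype.equivFin _), ?_⟩
    rw [Module.Basis.range_reindex]
    exact hsp
  set eV : Fin d → V n := fun t => (e t : V n) with heV
  -- the Gram matrix
  set G : Matrix (Fin d) (Fin d) ℝ := Matrix.of fun s t => eV s ⬝ᵥ eV t with hG
  have key : ∀ (c : Fin d → ℝ) (s : Fin d), eV s ⬝ᵥ (∑ t, c t • eV t) = G.mulVec c s := by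
    intro c s
    rw [dot_sum_right, Matrix.mulVec]
    refine Finset.sum_congr rfl fun t _ => ?_
    rw [dotProduct_smul, smul_eq_mul, mul_comm]
    rfl
  have hGinj : Function.Injective G.mulVecLin := by
    rw [← LinearMap.ker_eq_bot, LinearMap.ker_eq_bot']
    intro c hc
    rw [Matrix.mulVecLin_apply] at hc
    have hu : (∑ t, c t • eV t) ⬝ᵥ (∑ t, c t • eV t) = 0 := by
      rw [dot_sum_left]
      refine Finset.sum_eq_zero fun s _ => ?_
      rw [smul_dotProduct, key c s, hc]
      simp
    have h0 : (∑ t, c t • eV t) = 0 := dotProduct_self_eq_zero.mp hu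
    have h0W : (∑ t, c t • e t) = (0 : W) := by
      apply Subtype.ext
      rw [coeW_sum_smulR]
      exact h0
    exact funext (Fintype.linearIndependent_iff.mp e.linearIndependent c h0W)
  have hGsurj : Function.Surjective G.mulVecLin :=
    (LinearMap.injective_iff_surjective).mp hGinj
  have hstar : ∀ t : Fin d, ∃ es : V n, es ∈ W ∧
      ∀ s, eV s ⬝ᵥ es = if s = t then (1:ℝ) else 0 := by
    intro t
    obtain ⟨ct, hct⟩ := hGsurj (Pi.single t 1)
    rw [Matrix.mulVecLin_apply] at hct
    refine ⟨∑ s, ct s • eV s, Submodule.sum_mem _ fun s _ => Submodule.smul_mem _ _ (e s).2, ?_⟩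
    intro s
    rw [key ct s, hct, Pi.single_apply]
  choose estar hstarW hstardot using hstar
  -- pairing with estar gives coordinates
  have hrepr : ∀ (z : W) (t : Fin d), (z : V n) ⬝ᵥ estar t = e.repr z t := by
    intro z t
    have hz : (z : V n) = ∑ s, e.repr z s • eV s := by
      conv_lhs => rw [← e.sum_repr z]
      exact coeW_sum_smulR W _ _
    rw [hz, dot_sum_left]
    have : ∀ s, (e.repr z s • eV s) ⬝ᵥ estar t = if s = t then e.repr z s else 0 := by
      intro s
      rw [smul_dotProduct, hstardot t s, smul_eq_mul, mul_ite, mul_one, mul_zero]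
    rw [Finset.sum_congr rfl fun s _ => this s, Finset.sum_ite_eq' Finset.univ t]
    simp
  have hcoord : ∀ x ∈ W, x = ∑ t, (x ⬝ᵥ estar t) • eV t := by
    intro x hx
    have hz : x = ∑ t, e.repr ⟨x, hx⟩ t • eV t := by
      conv_lhs => rw [show x = ((⟨x, hx⟩ : W) : V n) from rfl, ← e.sum_repr ⟨x, hx⟩]
      exact coeW_sum_smulR W _ _
    conv_lhs => rw [hz]
    exact Finset.sum_congr rfl fun t _ => by rw [← hrepr ⟨x, hx⟩ t]
  refine ⟨d, eV, estar, hstarW, hcoord, fun x => ?_⟩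
  rw [hdiffL]
  constructor
  · rintro ⟨z, hz, rfl⟩
    refine ⟨z.2, fun t => ?_⟩
    rw [← hspanE'] at hz
    obtain ⟨m, hm⟩ := (Submodule.mem_span_range_iff_exists_fun ℤ).mp hz
    refine ⟨m t, ?_⟩
    rw [hrepr z t, ← hm, zsum_eq_rsum]
    exact congrFun (e.repr_sum_self (fun i => ((m i : ℤ) : ℝ))) t
  · rintro ⟨hx, hint⟩
    choose m hm using hint
    refine ⟨⟨x, hx⟩, ?_, rfl⟩
    rw [← hspanE', Submodule.mem_span_range_iff_exists_fun ℤ]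
    refine ⟨m, ?_⟩
    apply Subtype.ext
    rw [coeW_sum_smulZ]
    conv_rhs => rw [show ((⟨x, hx⟩ : W) : V n) = x from rfl, hcoord x hx]
    exact Finset.sum_congr rfl fun t _ => by rw [hm t]

end Lattice
section Forward

lemma forward_dir {n k l : ℕ} (S : Matrix (Fin k) (Fin l) ℤ)
    (hnn : ∀ i j, 0 ≤ S i j)
    (hrows : ∀ i : Fin k, ¬ ∃ c : Fin k → ℝ, (∀ i', 0 ≤ c i') ∧ c i = 0 ∧
      rowVec S i = ∑ i', c i' • rowVec S i')
    (Γ : Set (V n)) (hsg : IsAffineSemigroup Γ) (hslack : IsSlackMatrix Γ S) :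
    diffSet (GammaRow S) ∩ coneOf (GammaRow S) = nnIntPts l ∩ RowSpace S ∧
      GammaCol S = nnIntPts k ∩ ColSpace S := by
  classical
  obtain ⟨a, b, hainj, hbinj, hamin, hbmin, hS⟩ := hslack
  have hΓ : (AddSubmonoid.closure (Set.range a) : Set (V n)) = Γ := hamin.1
  have hBΓ : (AddSubmonoid.closure (Set.range b) : Set (V n)) = dualSemigroup Γ := hbmin.1
  have hdisc : IsDiscreteSet (diffSet (AddSubmonoid.closure (Set.range a) : Set (V n))) := by
    rw [hΓ]; exact hsg.2
  have hab : ∀ i j, a i ⬝ᵥ b j = (S i j : ℝ) := fun i j => (hS i j).symm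
  -- positive row sums
  have hrowpos : ∀ i, 1 ≤ ∑ j, S i j := by
    intro i
    by_contra h
    push_neg at h
    have hsum0 : ∑ j, S i j = 0 :=
      le_antisymm (by omega) (Finset.sum_nonneg fun j _ => hnn i j)
    have hall : ∀ j, S i j = 0 := by
      intro j
      have := (Finset.sum_eq_zero_iff_of_nonneg (fun j _ => hnn i j)).mp hsum0
      exact this j (Finset.mem_univ j)
    have hzero : rowVec S i = 0 := by
      funext j; simp [rowVec, hall j]
    exact hrows i ⟨0, fun _ => le_refl _, rfl, by rw [hzero]; simp⟩
  -- dual semigroup characterization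
  have hdsg : ∀ w, w ∈ dualSemigroup Γ ↔
      (w ∈ Submodule.span ℝ (Set.range a) ∧ (∀ i, ∃ m : ℤ, w ⬝ᵥ a i = (m:ℝ)) ∧
        ∀ i, 0 ≤ a i ⬝ᵥ w) := by
    intro w; rw [← hΓ]; exact mem_dualSemigroup_closure_iff a w
  have hbdual : ∀ j, b j ∈ dualSemigroup Γ := by
    intro j
    rw [← hBΓ]
    exact AddSubmonoid.subset_closure (Set.mem_range_self j)
  have hbspan : ∀ j, b j ∈ Submodule.span ℝ (Set.range a) := fun j => ((hdsg _).mp (hbdual j)).1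
  have hdual_comb : ∀ w ∈ dualSemigroup Γ, ∃ m : Fin l → ℕ, w = ∑ j, (m j : ℝ) • b j := by
    intro w hw
    rw [← hBΓ] at hw
    exact (mem_closure_range_iff b w).mp hw
  -- Key: every u in the span with integer a-pairings is a ℤ-combination of the b's
  have hLambdaStar : ∀ u, u ∈ Submodule.span ℝ (Set.range a) →
      (∀ i, ∃ m : ℤ, a i ⬝ᵥ u = (m:ℝ)) → ∃ g : Fin l → ℤ, u = ∑ j, (g j : ℝ) • b j := by
    intro u hu hint
    choose mi hmi using hint
    set N : ℤ := ∑ i, |mi i| with hN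
    set v : V n := ∑ j, b j with hv
    have hav : ∀ i, a i ⬝ᵥ v = ((∑ j, S i j : ℤ) : ℝ) := by
      intro i
      rw [hv, dot_sum_right]
      push_cast
      exact Finset.sum_congr rfl fun j _ => hab i j
    have hNpos : ∀ i, 0 ≤ mi i + N * (∑ j, S i j) := by
      intro i
      have h1 : |mi i| ≤ N := Finset.single_le_sum (f := fun i => |mi i|)
        (fun i _ => abs_nonneg _) (Finset.mem_univ i)
      have h2 : 1 ≤ ∑ j, S i j := hrowpos i
      have h3 : 0 ≤ N := Finset.sum_nonneg fun i _ => abs_nonneg _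
      nlinarith [neg_abs_le (mi i)]
    have hu' : u + (N:ℝ) • v ∈ dualSemigroup Γ := by
      rw [hdsg]
      refine ⟨Submodule.add_mem _ hu (Submodule.smul_mem _ _
        (Submodule.sum_mem _ fun j _ => hbspan j)),
        fun i => ⟨mi i + N * ∑ j, S i j, ?_⟩, fun i => ?_⟩
      · rw [dotProduct_comm, dotProduct_add, dotProduct_smul,
          hmi i, hav i, smul_eq_mul]
        push_cast
        ring
      · rw [dotProduct_add, dotProduct_smul, hmi i, hav i, smul_eq_mul]
        exact_mod_cast hNpos i
    obtain ⟨mj, hmj⟩ := hdual_comb _ hu'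
    refine ⟨fun j => (mj j : ℤ) - N, ?_⟩
    have hu2 : u = (u + (N:ℝ) • v) - (N:ℝ) • v := by abel
    rw [hu2, hmj, hv, Finset.smul_sum, ← Finset.sum_sub_distrib]
    refine Finset.sum_congr rfl fun j _ => ?_
    rw [← sub_smul]
    congr 1
    push_cast
    ring
  -- dual basis package
  obtain ⟨d, eV, estar, hstarW, hcoord, hdiffChar⟩ := exists_dual_basis a hdisc
  have hadiff : ∀ i, a i ∈ diffSet (AddSubmonoid.closure (Set.range a) : Set (V n)) := by
    intro i
    exact ⟨a i, AddSubmonoid.subset_closure (Set.mem_range_self i), 0,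
      zero_mem_closure a, by simp⟩
  have haint := fun i => ((hdiffChar (a i)).mp (hadiff i)).2
  choose Ac hAc using haint
  have haspan : ∀ i, a i ∈ Submodule.span ℝ (Set.range a) :=
    fun i => Submodule.subset_span (Set.mem_range_self i)
  have hacoord : ∀ i, a i = ∑ t, (Ac i t : ℝ) • eV t := by
    intro i
    conv_lhs => rw [hcoord (a i) (haspan i)]
    exact Finset.sum_congr rfl fun t _ => by rw [hAc i t]
  -- estar t is a ℤ-combination of the b's
  have hstar_comb : ∀ t, ∃ g : Fin l → ℤ, estar t = ∑ j, (g j : ℝ) • b j :=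
    fun t => hLambdaStar (estar t) (hstarW t) (fun i => ⟨Ac i t, hAc i t⟩)
  constructor
  · -- PART 1
    ext y
    constructor
    · rintro ⟨hyd, hyc⟩
      rw [← GammaRow_eq_closure S] at hyd hyc
      rw [diffSet_closure_eq] at hyd
      rw [coneOf_closure_eq] at hyc
      obtain ⟨c, hc⟩ := hyd
      obtain ⟨cr, hcr0, hcr⟩ := hyc
      constructor
      · intro j
        have h1 : y j = ((∑ i, c i * S i j : ℤ) : ℝ) := by
          rw [hc]
          push_cast
          simp [Finset.sum_apply, rowVec]
        have h2 : 0 ≤ y j := by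
          rw [hcr]
          simp only [Finset.sum_apply, Pi.smul_apply, smul_eq_mul]
          refine Finset.sum_nonneg fun i _ => mul_nonneg (hcr0 i) ?_
          show (0:ℝ) ≤ ((S i j : ℤ) : ℝ)
          exact_mod_cast hnn i j
        refine ⟨(∑ i, c i * S i j).toNat, ?_⟩
        rw [h1]
        have : (0:ℤ) ≤ ∑ i, c i * S i j := by
          have := h1 ▸ h2
          exact_mod_cast this
        exact_mod_cast (congrArg (fun z : ℤ => (z : ℝ)) (Int.toNat_of_nonneg this)).symm
      · show y ∈ (Submodule.span ℝ (Set.range (rowVec S)) : Set (V l))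
        rw [SetLike.mem_coe, hc]
        exact Submodule.sum_mem _ fun i _ => Submodule.smul_mem _ _
          (Submodule.subset_span (Set.mem_range_self i))
    · rintro ⟨hyInt, hySpan⟩
      choose my hmy using hyInt
      rw [show RowSpace S = (Submodule.span ℝ (Set.range (rowVec S)) : Set (V l)) from rfl,
        SetLike.mem_coe, Submodule.mem_span_range_iff_exists_fun ℝ] at hySpan
      obtain ⟨r, hr⟩ := hySpan
      set x : V n := ∑ i, r i • a i with hx
      have hxspan : x ∈ Submodule.span ℝ (Set.range a) :=
        Submodule.sum_mem _ fun i _ => Submodule.smul_mem _ _ (haspan i)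
      have hxb : ∀ j, x ⬝ᵥ b j = y j := by
        intro j
        rw [hx, dot_sum_left, ← hr]
        simp only [Finset.sum_apply, Pi.smul_apply, smul_eq_mul]
        refine Finset.sum_congr rfl fun i _ => ?_
        rw [smul_dotProduct, hab i j, smul_eq_mul]
        rfl
      have hxint : ∀ t, ∃ m : ℤ, x ⬝ᵥ estar t = (m:ℝ) := by
        intro t
        obtain ⟨g, hg⟩ := hstar_comb t
        refine ⟨∑ j, g j * (my j : ℤ), ?_⟩
        rw [hg, dot_sum_right]
        push_cast
        refine Finset.sum_congr rfl fun j _ => ?_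
        rw [dotProduct_smul, hxb j, hmy j, smul_eq_mul]
      choose xc hxc using hxint
      have hxdiff : x ∈ diffSet (AddSubmonoid.closure (Set.range a) : Set (V n)) :=
        (hdiffChar x).mpr ⟨hxspan, fun t => ⟨xc t, hxc t⟩⟩
      have hxcoord : x = ∑ t, (xc t : ℝ) • eV t := by
        conv_lhs => rw [hcoord x hxspan]
        exact Finset.sum_congr rfl fun t _ => by rw [hxc t]
      constructor
      · -- y ∈ diffSet (GammaRow S)
        obtain ⟨p, hp, q, hq, hpq⟩ := hxdiff
        obtain ⟨cp, hcp⟩ := (mem_closure_range_iff a p).mp hp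
        obtain ⟨cq, hcq⟩ := (mem_closure_range_iff a q).mp hq
        rw [← GammaRow_eq_closure S]
        refine ⟨∑ i, (cp i : ℝ) • rowVec S i, (mem_closure_range_iff _ _).mpr ⟨cp, rfl⟩,
          ∑ i, (cq i : ℝ) • rowVec S i, (mem_closure_range_iff _ _).mpr ⟨cq, rfl⟩, ?_⟩
        funext j
        have h1 : y j = x ⬝ᵥ b j := (hxb j).symm
        have h2 : x ⬝ᵥ b j = p ⬝ᵥ b j - q ⬝ᵥ b j := by
          rw [hpq, sub_dotProduct]
        have hp' : p ⬝ᵥ b j = ∑ i, (cp i : ℝ) * (S i j : ℝ) := by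
          rw [hcp, dot_sum_left]
          refine Finset.sum_congr rfl fun i _ => ?_
          rw [smul_dotProduct, hab i j, smul_eq_mul]
        have hq' : q ⬝ᵥ b j = ∑ i, (cq i : ℝ) * (S i j : ℝ) := by
          rw [hcq, dot_sum_left]
          refine Finset.sum_congr rfl fun i _ => ?_
          rw [smul_dotProduct, hab i j, smul_eq_mul]
        rw [Pi.sub_apply, h1, h2, hp', hq']
        simp only [Finset.sum_apply, Pi.smul_apply, smul_eq_mul, rowVec]
      · -- y ∈ coneOf (GammaRow S) via Farkas
        rcases farkasQ (fun i => fun t => ((Ac i t : ℤ) : ℚ)) (fun t => ((xc t : ℤ) : ℚ)) with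
          ⟨c, hc0, hcx⟩ | ⟨wq, hwq0, hwqneg⟩
        · set cr : Fin k → ℝ := fun i => ((c i : ℚ) : ℝ) with hcr
          have hcr0 : ∀ i, 0 ≤ cr i := fun i => by
            simp only [hcr]; exact_mod_cast hc0 i
          have hxcomb : x = ∑ i, cr i • a i := by
            have hcoeff : ∀ t, (xc t : ℝ) = ∑ i, cr i * (Ac i t : ℝ) := by
              intro t
              have := congrFun hcx t
              simp only [Finset.sum_apply, Pi.smul_apply, smul_eq_mul] at this
              have h' := congrArg (fun q : ℚ => (q : ℝ)) this
              push_cast at h'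
              simp only [hcr]
              exact_mod_cast h'
            calc x = ∑ t, (xc t : ℝ) • eV t := hxcoord
              _ = ∑ t, (∑ i, cr i * (Ac i t : ℝ)) • eV t :=
                  Finset.sum_congr rfl fun t _ => by rw [hcoeff t]
              _ = ∑ t, ∑ i, (cr i * (Ac i t : ℝ)) • eV t :=
                  Finset.sum_congr rfl fun t _ => by rw [Finset.sum_smul]
              _ = ∑ i, ∑ t, (cr i * (Ac i t : ℝ)) • eV t := Finset.sum_comm
              _ = ∑ i, cr i • a i := by
                  refine Finset.sum_congr rfl fun i _ => ?_
                  rw [hacoord i, Finset.smul_sum]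
                  refine Finset.sum_congr rfl fun t _ => ?_
                  rw [smul_smul]
        -- conclude
          rw [← GammaRow_eq_closure S, coneOf_closure_eq]
          refine ⟨cr, hcr0, ?_⟩
          funext j
          have h1 : y j = x ⬝ᵥ b j := (hxb j).symm
          rw [h1, hxcomb, dot_sum_left]
          simp only [Finset.sum_apply, Pi.smul_apply, smul_eq_mul]
          refine Finset.sum_congr rfl fun i _ => ?_
          rw [smul_dotProduct, hab i j, smul_eq_mul]
          rfl
        · exfalso
          set m : ℕ := ∏ t, (wq t).den with hm
          have hmpos : 0 < m := Finset.prod_pos fun t _ => (wq t).pos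
          have hden : ∀ t, ∃ z : ℤ, ((m:ℚ) * wq t) = (z:ℚ) := by
            intro t
            obtain ⟨s, hs⟩ := Finset.dvd_prod_of_mem (fun t => (wq t).den) (Finset.mem_univ t)
            refine ⟨(wq t).num * s, ?_⟩
            rw [← hm] at hs
            rw [hs]
            push_cast
            rw [mul_comm ((wq t).den : ℚ) (s:ℚ), mul_assoc, Rat.den_mul_eq_num]
            ring
          choose zq hzq using hden
          set u : V n := ∑ t, (zq t : ℝ) • estar t with hu
          have hau : ∀ i, a i ⬝ᵥ u = ((∑ t, zq t * Ac i t : ℤ) : ℝ) := by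
            intro i
            rw [hu, dot_sum_right]
            push_cast
            refine Finset.sum_congr rfl fun t _ => ?_
            rw [dotProduct_smul, hAc i t, smul_eq_mul]
          have hauQ : ∀ i, ((∑ t, zq t * Ac i t : ℤ) : ℚ) =
              (m:ℚ) * ((fun t => ((Ac i t : ℤ) : ℚ)) ⬝ᵥ wq) := by
            intro i
            push_cast
            rw [dotProduct, Finset.mul_sum]
            refine Finset.sum_congr rfl fun t _ => ?_
            rw [← hzq t]
            ring
          have hau_nonneg : ∀ i, 0 ≤ a i ⬝ᵥ u := by
            intro i
            rw [hau i]
            have h1 : (0:ℚ) ≤ ((∑ t, zq t * Ac i t : ℤ) : ℚ) := by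
              rw [hauQ i]
              exact mul_nonneg (by exact_mod_cast hmpos.le) (hwq0 i)
            exact_mod_cast h1
          have humem : u ∈ dualSemigroup Γ := by
            rw [hdsg]
            exact ⟨Submodule.sum_mem _ fun t _ => Submodule.smul_mem _ _ (hstarW t),
              fun i => ⟨∑ t, zq t * Ac i t, by rw [dotProduct_comm]; exact hau i⟩,
              hau_nonneg⟩
          obtain ⟨mm, hmm⟩ := hdual_comb u humem
          have hxu_nonneg : 0 ≤ x ⬝ᵥ u := by
            rw [hmm, dot_sum_right]
            refine Finset.sum_nonneg fun j _ => ?_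
            rw [dotProduct_smul, hxb j, hmy j, smul_eq_mul]
            positivity
          have hxu_neg : x ⬝ᵥ u < 0 := by
            have h1 : x ⬝ᵥ u = ((∑ t, zq t * xc t : ℤ) : ℝ) := by
              rw [hu, dot_sum_right]
              push_cast
              refine Finset.sum_congr rfl fun t _ => ?_
              rw [dotProduct_smul, hxc t, smul_eq_mul]
            have h2 : ((∑ t, zq t * xc t : ℤ) : ℚ) =
                (m:ℚ) * ((fun t => ((xc t : ℤ) : ℚ)) ⬝ᵥ wq) := by
              push_cast
              rw [dotProduct, Finset.mul_sum]
              refine Finset.sum_congr rfl fun t _ => ?_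
              rw [← hzq t]
              ring
            have h3 : ((∑ t, zq t * xc t : ℤ) : ℚ) < 0 := by
              rw [h2]
              exact mul_neg_of_pos_of_neg (by exact_mod_cast hmpos) hwqneg
            rw [h1]
            exact_mod_cast h3
          linarith
  · -- PART 2
    ext y
    constructor
    · rintro ⟨c, rfl⟩
      constructor
      · intro i
        refine ⟨∑ j, c j * (S i j).toNat, ?_⟩
        simp only [Finset.sum_apply, Pi.smul_apply, smul_eq_mul, colVec]
        push_cast
        refine Finset.sum_congr rfl fun j _ => ?_
        congr 1
        exact_mod_cast (congrArg (fun z : ℤ => (z : ℝ)) (Int.toNat_of_nonneg (hnn i j))).symm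
      · show _ ∈ (Submodule.span ℝ (Set.range (colVec S)) : Set (V k))
        rw [SetLike.mem_coe]
        exact Submodule.sum_mem _ fun j _ => Submodule.smul_mem _ _
          (Submodule.subset_span (Set.mem_range_self j))
    · rintro ⟨hyInt, hySpan⟩
      choose my hmy using hyInt
      rw [show ColSpace S = (Submodule.span ℝ (Set.range (colVec S)) : Set (V k)) from rfl,
        SetLike.mem_coe, Submodule.mem_span_range_iff_exists_fun ℝ] at hySpan
      obtain ⟨r, hr⟩ := hySpan
      set w : V n := ∑ j, r j • b j with hw
      have hwa : ∀ i, a i ⬝ᵥ w = y i := by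
        intro i
        rw [hw, dot_sum_right, ← hr]
        simp only [Finset.sum_apply, Pi.smul_apply, smul_eq_mul]
        refine Finset.sum_congr rfl fun j _ => ?_
        rw [dotProduct_smul, hab i j, smul_eq_mul]
        rfl
      have hwmem : w ∈ dualSemigroup Γ := by
        rw [hdsg]
        refine ⟨Submodule.sum_mem _ fun j _ => Submodule.smul_mem _ _ (hbspan j),
          fun i => ⟨my i, by rw [dotProduct_comm, hwa i, hmy i]; push_cast; ring⟩,
          fun i => by rw [hwa i, hmy i]; positivity⟩
      obtain ⟨mm, hmm⟩ := hdual_comb w hwmem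
      refine ⟨mm, ?_⟩
      funext i
      have h1 : y i = a i ⬝ᵥ w := (hwa i).symm
      rw [h1, hmm, dot_sum_right]
      simp only [Finset.sum_apply, Pi.smul_apply, smul_eq_mul, colVec]
      refine Finset.sum_congr rfl fun j _ => ?_
      rw [dotProduct_smul, hab i j, smul_eq_mul]

end Forward

/-- If no row of `S` is a nonnegative real combination of the other rows
and no column is a nonnegative real combination of the other columns, then `S` is the
slack matrix of a positive affine semigroup iff the normalization of `Γ_S^row` equals
`ℤ₊^l ∩ Row(S)` and `Γ_S^col = ℤ₊^k ∩ Col(S)`. -/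
theorem slack_matrix_characterization_irredundant {k l : ℕ} (S : Matrix (Fin k) (Fin l) ℤ)
    (hnn : ∀ i j, 0 ≤ S i j)
    (hrows : ∀ i : Fin k, ¬ ∃ c : Fin k → ℝ, (∀ i', 0 ≤ c i') ∧ c i = 0 ∧
      rowVec S i = ∑ i', c i' • rowVec S i')
    (hcols : ∀ j : Fin l, ¬ ∃ c : Fin l → ℝ, (∀ j', 0 ≤ c j') ∧ c j = 0 ∧
      colVec S j = ∑ j', c j' • colVec S j') :
    (∃ (n : ℕ) (Γ : Set (V n)), IsAffineSemigroup Γ ∧ IsPositive Γ ∧ IsSlackMatrix Γ S) ↔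
      (diffSet (GammaRow S) ∩ coneOf (GammaRow S) = nnIntPts l ∩ RowSpace S ∧
       GammaCol S = nnIntPts k ∩ ColSpace S) := by
  constructor
  · rintro ⟨n, Γ, hsg, hpos, hslack⟩
    exact forward_dir S hnn hrows Γ hsg hslack
  · rintro ⟨h1, h2⟩
    obtain ⟨hsg, hpos, hslack⟩ := backward_dir S hnn hrows hcols h2
    exact ⟨l, GammaRow S, hsg, hpos, hslack⟩

end
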